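/- Let m be a positive integer and let Γ be a finitely generated subgroup of the general linear group GL(m, ℂ). Then Γ is residually finite: for every γ ∈ Γ with γ ≠ 1, there exists a normal subgroup N of Γ of finite index such that γ ∉ N. -/

import Mathlib

instance : IsJacobsonRing ℤ := by
  rw [isJacobsonRing_iff_prime_eq]
  intro P hP
  by_cases hbot : P = ⊥
  · subst hbot
    refine le_antisymm ?_ Ideal.le_jacobson
    intro x hx
    rw [Ideal.mem_jacobson_bot] at hx
    have h1 : IsUnit (x * x + 1) := hx x
    rw [Int.isUnit_iff] at h1
    have : x = 0 := by rcases h1 with h | h <;> nlinarith [sq_nonneg x]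
    simpa using this
  · haveI := IsPrime.to_maximal_ideal (S := P) hbot
    exact Ideal.jacobson_eq_self_of_isMaximal

lemma aux_field_finite (K : Type*) [Field K] [Module.Finite ℤ K] : Finite K := by
  by_cases hchar : (ringChar K) = 0
  · haveI : CharP K 0 := hchar ▸ ringChar.charP K
    haveI : CharZero K := CharP.charP_to_charZero K
    exfalso
    haveI : IsNoetherian ℤ K := inferInstance
    have hinj : Function.Injective (algebraMap ℚ K) := (algebraMap ℚ K).injective
    let f : ℚ →ₗ[ℤ] K := (Algebra.linearMap ℚ K).restrictScalars ℤ
    haveI : Module.Finite ℤ ℚ := Module.Finite.of_injective f (by exact hinj)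
    haveI : Algebra.IsIntegral ℤ ℚ := Algebra.IsIntegral.of_finite ℤ ℚ
    obtain ⟨n, hn⟩ := IsIntegrallyClosed.isIntegral_iff.mp
      (Algebra.IsIntegral.isIntegral (R := ℤ) ((2:ℚ)⁻¹))
    have h : (n : ℚ) = (2:ℚ)⁻¹ := by exact_mod_cast hn
    have h2 : (2 : ℚ) * n = 1 := by rw [h]; norm_num
    have : (2 : ℤ) * n = 1 := by exact_mod_cast h2
    omega
  · apply Module.finite_of_fg_torsion
    intro x
    refine ⟨⟨(ringChar K : ℤ), mem_nonZeroDivisors_of_ne_zero (by exact_mod_cast hchar)⟩, ?_⟩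
    have h0 : ((ringChar K : ℤ) : K) = 0 := by
      push_cast
      exact ringChar.spec K (ringChar K) |>.mpr dvd_rfl
    show (ringChar K : ℤ) • x = 0
    rw [zsmul_eq_mul, h0, zero_mul]

lemma aux_rep (n : ℕ) (T : Type*) [CommRing T] [IsDomain T] [Algebra.FiniteType ℤ T]
    {G : Type*} [Group G] (ρ : G →* (Matrix (Fin n) (Fin n) T)ˣ) (γ : G)
    (hγ : ρ γ ≠ 1) :
    ∃ N : Subgroup G, N.Normal ∧ N.FiniteIndex ∧ γ ∉ N := by
  haveI : IsJacobsonRing T := isJacobsonRing_of_finiteType (A := ℤ)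
  have hmat : ((ρ γ).val : Matrix (Fin n) (Fin n) T) ≠ 1 := fun h =>
    hγ (Units.ext (h.trans Units.val_one.symm))
  obtain ⟨i, hi⟩ := Function.ne_iff.mp hmat
  obtain ⟨j, hij⟩ := Function.ne_iff.mp hi
  set x : T := (ρ γ).val i j - (1 : Matrix (Fin n) (Fin n) T) i j with hx
  have hxne : x ≠ 0 := sub_ne_zero.mpr hij
  have hjac : (⊥ : Ideal T).jacobson = ⊥ :=
    (‹IsJacobsonRing T›).out Ideal.bot_prime.isRadical
  have hxnotbot : x ∉ (⊥ : Ideal T).jacobson := by rw [hjac]; simpa using hxne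
  rw [Ideal.jacobson, Ideal.mem_sInf] at hxnotbot
  push_neg at hxnotbot
  obtain ⟨𝔪, ⟨-, h𝔪max⟩, hx𝔪⟩ := hxnotbot
  haveI : 𝔪.IsMaximal := h𝔪max
  letI : Field (T ⧸ 𝔪) := Ideal.Quotient.field 𝔪
  haveI : Algebra.FiniteType ℤ (T ⧸ 𝔪) :=
    Algebra.FiniteType.of_surjective
      (Ideal.Quotient.mkₐ ℤ 𝔪) (Ideal.Quotient.mkₐ_surjective ℤ 𝔪)
  haveI : Module.Finite ℤ (T ⧸ 𝔪) := finite_of_finite_type_of_isJacobsonRing ℤ _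
  haveI : Finite (T ⧸ 𝔪) := aux_field_finite _
  let q : T →+* T ⧸ 𝔪 := Ideal.Quotient.mk 𝔪
  let φ : G →* (Matrix (Fin n) (Fin n) (T ⧸ 𝔪))ˣ :=
    (Units.map (q.mapMatrix : Matrix (Fin n) (Fin n) T →+* Matrix (Fin n) (Fin n) (T ⧸ 𝔪)).toMonoidHom).comp ρ
  refine ⟨φ.ker, MonoidHom.normal_ker φ, Subgroup.finiteIndex_ker φ, ?_⟩
  intro hker
  apply hx𝔪
  have hker' : φ γ = 1 := hker
  have hval : q.mapMatrix (ρ γ).val = 1 := congrArg Units.val hker'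
  have h1 := congrFun (congrFun hval i) j
  have h2 : q ((1 : Matrix (Fin n) (Fin n) T) i j)
      = (1 : Matrix (Fin n) (Fin n) (T ⧸ 𝔪)) i j := by
    rw [Matrix.one_apply, Matrix.one_apply, apply_ite q, map_one, map_zero]
  have h3 : q ((ρ γ).val i j) = q ((1 : Matrix (Fin n) (Fin n) T) i j) := by
    rw [h2]; exact h1
  have : q x = 0 := by rw [hx, map_sub, h3, sub_self]
  exact Ideal.Quotient.eq_zero_iff_mem.mp this



/-- Selberg–Mal'cev lemma over ℂ: every finitely generated subgroup of
`GL(m, ℂ)` is residually finite: every nontrivial element is excluded by some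
finite-index normal subgroup. -/
theorem finitely_generated_linear_group_complex_residually_finite
    (m : ℕ) (hm : 0 < m)
    (Γ : Subgroup (Matrix.GeneralLinearGroup (Fin m) ℂ))
    (hΓ : Group.FG Γ) :
    ∀ γ : Γ, γ ≠ 1 →
      ∃ N : Subgroup Γ, N.Normal ∧ N.FiniteIndex ∧ γ ∉ N := by
  obtain ⟨S, hS, hSfin⟩ := Subgroup.fg_iff Γ |>.mp ((Group.fg_iff_subgroup_fg Γ).mp hΓ)
  set E : Set ℂ := (⋃ g ∈ S, Set.range (fun p : Fin m × Fin m =>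
      ((g : Matrix (Fin m) (Fin m) ℂ)) p.1 p.2)) ∪
    (⋃ g ∈ S, Set.range (fun p : Fin m × Fin m =>
      (((g⁻¹ : Matrix.GeneralLinearGroup (Fin m) ℂ) : Matrix (Fin m) (Fin m) ℂ)) p.1 p.2)) with hE
  have hEfin : E.Finite := by
    refine Set.Finite.union ?_ ?_
    · exact Set.Finite.biUnion hSfin (fun g _ => Set.finite_range _)
    · exact Set.Finite.biUnion hSfin (fun g _ => Set.finite_range _)
  set R := Algebra.adjoin ℤ E with hR
  have hRfg : R.FG := Subalgebra.fg_def.mpr ⟨E, hEfin, rfl⟩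
  haveI hft : Algebra.FiniteType ℤ R := (Subalgebra.fg_iff_finiteType R).mp hRfg
  have key : ∀ g : Matrix.GeneralLinearGroup (Fin m) ℂ, g ∈ Γ → ∀ i j,
      ((g : Matrix (Fin m) (Fin m) ℂ) i j ∈ R ∧
       ((g⁻¹ : Matrix.GeneralLinearGroup (Fin m) ℂ) : Matrix (Fin m) (Fin m) ℂ) i j ∈ R) := by
    intro g hg
    rw [← hS] at hg
    induction hg using Subgroup.closure_induction with
    | mem x hx =>
      intro i j
      constructor
      · exact Algebra.subset_adjoin (Or.inl (Set.mem_biUnion hx ⟨(i,j), rfl⟩))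
      · exact Algebra.subset_adjoin (Or.inr (Set.mem_biUnion hx ⟨(i,j), rfl⟩))
    | one =>
      intro i j
      simp only [inv_one]
      constructor <;>
      · show (1 : Matrix (Fin m) (Fin m) ℂ) i j ∈ R
        rw [Matrix.one_apply]
        split
        · exact one_mem R
        · exact zero_mem R
    | mul x y hx hy ihx ihy =>
      intro i j
      constructor
      · show ((x * y : Matrix.GeneralLinearGroup (Fin m) ℂ) : Matrix (Fin m) (Fin m) ℂ) i j ∈ R
        rw [Units.val_mul, Matrix.mul_apply]
        exact Subalgebra.sum_mem R fun k _ => mul_mem (ihx i k).1 (ihy k j).1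
      · show (((x * y)⁻¹ : Matrix.GeneralLinearGroup (Fin m) ℂ) : Matrix (Fin m) (Fin m) ℂ) i j ∈ R
        rw [_root_.mul_inv_rev, Units.val_mul, Matrix.mul_apply]
        exact Subalgebra.sum_mem R fun k _ => mul_mem (ihy i k).2 (ihx k j).2
    | inv x hx ihx =>
      intro i j
      exact ⟨(ihx i j).2, by rw [inv_inv]; exact (ihx i j).1⟩
  clear hR hRfg hS hSfin hE hEfin
  clear_value R
  clear E
  -- the matrix representation over R
  let A : Γ → Matrix (Fin m) (Fin m) R := fun δ =>
    Matrix.of fun i j =>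
      (⟨((δ : Matrix.GeneralLinearGroup (Fin m) ℂ) : Matrix (Fin m) (Fin m) ℂ) i j,
        (key δ δ.2 i j).1⟩ : R)
  have hAmul : ∀ δ ε : Γ, A (δ * ε) = A δ * A ε := by
    intro δ ε
    ext i j
    show (((δ * ε : Γ) : Matrix.GeneralLinearGroup (Fin m) ℂ) : Matrix (Fin m) (Fin m) ℂ) i j
      = (((A δ * A ε) i j : R) : ℂ)
    rw [Matrix.mul_apply]
    push_cast
    rw [Matrix.mul_apply]
    rfl
  have hA1 : A 1 = 1 := by
    ext i j
    show ((1 : Matrix.GeneralLinearGroup (Fin m) ℂ) : Matrix (Fin m) (Fin m) ℂ) i j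
      = (((1 : Matrix (Fin m) (Fin m) R) i j : R) : ℂ)
    simp only [Units.val_one, Matrix.one_apply, apply_ite (fun r : R => (r : ℂ))]
    push_cast
    rfl
  let ρ : Γ →* (Matrix (Fin m) (Fin m) R)ˣ :=
    { toFun := fun δ =>
        { val := A δ
          inv := A δ⁻¹
          val_inv := by rw [← hAmul, mul_inv_cancel, hA1]
          inv_val := by rw [← hAmul, inv_mul_cancel, hA1] }
      map_one' := Units.ext hA1
      map_mul' := fun δ ε => Units.ext (hAmul δ ε) }
  intro γ hγ
  have hργ : ρ γ ≠ 1 := by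
    intro h
    apply hγ
    have hval : A γ = 1 := congrArg Units.val h
    have : ((γ : Matrix.GeneralLinearGroup (Fin m) ℂ) : Matrix (Fin m) (Fin m) ℂ)
        = (1 : Matrix (Fin m) (Fin m) ℂ) := by
      ext i j
      have := congrArg (fun M : Matrix (Fin m) (Fin m) R => ((M i j : R) : ℂ)) hval
      beta_reduce at this
      rw [show (((A γ) i j : R) : ℂ)
        = ((γ : Matrix.GeneralLinearGroup (Fin m) ℂ) : Matrix (Fin m) (Fin m) ℂ) i j from rfl] at this
      rw [this, Matrix.one_apply, Matrix.one_apply, apply_ite (fun r : R => (r : ℂ))]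
      push_cast
      rfl
    exact Subtype.ext (Units.ext (this.trans Units.val_one.symm))
  exact aux_rep m R ρ γ hργ
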